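/- arXiv:2003.05636 — 3 statements merged into one kernel-verified Lean document; each statement's English description precedes it below -/
import Mathlib

section
/- Let X be a measurable space, μ_s and μ_t probability measures on X, and f_s, f_t : X → Bool measurable labeling functions for the source and target domains. Let H be a set of measurable hypotheses η : X → Bool such that for all η, η' ∈ H the disagreement set {x | η x ≠ η' x} is measurable. Define the source risk ε_s(η) = μ_s {x | η x ≠ f_s x}, the target risk ε_t(η) = μ_t {x | η x ≠ f_t x}, and the divergence d_H(μ_s, μ_t) = sup over pairs η, η' ∈ H of |μ_s {x | η x ≠ η' x} − μ_t {x | η x ≠ η' x}| (taken in ℝ with measures evaluated as real numbers). Then for every η ∈ H and every η* ∈ H, the target risk satisfies ε_t(η) ≤ ε_s(η) + d_H(μ_s, μ_t) + ε_s(η*) + ε_t(η*). -/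
open MeasureTheory

/-- Generalization bound of domain adaptation: for any hypothesis `η` in the
hypothesis class `H` and any reference hypothesis `η*` in `H`, the target risk
of `η` is bounded by its source risk, plus the `H`-divergence between the
source and target distributions, plus the joint risk of `η*` on both domains. -/
theorem domain_adaptation_generalization_bound
    {X : Type*} [MeasurableSpace X]
    (μs μt : Measure X) [IsProbabilityMeasure μs] [IsProbabilityMeasure μt]
    (fs ft : X → Bool) (hfs : Measurable fs) (hft : Measurable ft)
    (H : Set (X → Bool)) (hH : ∀ η ∈ H, Measurable η)
    (hHpair : ∀ η ∈ H, ∀ η' ∈ H, MeasurableSet {x | η x ≠ η' x})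
    (εs εt : (X → Bool) → ℝ)
    (hεs : ∀ η, εs η = (μs {x | η x ≠ fs x}).toReal)
    (hεt : ∀ η, εt η = (μt {x | η x ≠ ft x}).toReal)
    (dH : ℝ)
    (hdH : dH = sSup {r : ℝ | ∃ η ∈ H, ∃ η' ∈ H,
      r = |(μs {x | η x ≠ η' x}).toReal - (μt {x | η x ≠ η' x}).toReal|}) :
    ∀ η ∈ H, ∀ ηstar ∈ H,
      εt η ≤ εs η + dH + (εs ηstar + εt ηstar) := by
  intro η hη ηstar hηstar
  have hone : ∀ (μ : Measure X) [IsProbabilityMeasure μ] (S : Set X),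
      (μ S).toReal ≤ 1 := by
    intro μ _ S
    have h := prob_le_one (μ := μ) (s := S)
    have := ENNReal.toReal_mono (by simp) h
    simpa using this
  -- dH bounds the target/source discrepancy on the disagreement set A
  set A := {x | η x ≠ ηstar x} with hA
  have hbdd : BddAbove {r : ℝ | ∃ η ∈ H, ∃ η' ∈ H,
      r = |(μs {x | η x ≠ η' x}).toReal - (μt {x | η x ≠ η' x}).toReal|} := by
    refine ⟨1, ?_⟩
    rintro r ⟨a, -, b, -, rfl⟩
    have h1 := hone μs {x | a x ≠ b x}
    have h2 := hone μt {x | a x ≠ b x}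
    have h1' : (0:ℝ) ≤ (μs {x | a x ≠ b x}).toReal := ENNReal.toReal_nonneg
    have h2' : (0:ℝ) ≤ (μt {x | a x ≠ b x}).toReal := ENNReal.toReal_nonneg
    rw [abs_sub_le_iff]
    constructor <;> linarith
  have hmem : |(μs A).toReal - (μt A).toReal| ∈ {r : ℝ | ∃ η ∈ H, ∃ η' ∈ H,
      r = |(μs {x | η x ≠ η' x}).toReal - (μt {x | η x ≠ η' x}).toReal|} :=
    ⟨η, hη, ηstar, hηstar, rfl⟩
  have hdiv : |(μs A).toReal - (μt A).toReal| ≤ dH := by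
    rw [hdH]; exact le_csSup hbdd hmem
  have hdiv' : (μt A).toReal ≤ (μs A).toReal + dH := by
    have := neg_abs_le ((μs A).toReal - (μt A).toReal)
    linarith
  -- triangle inequality on target
  have hsub_t : {x | η x ≠ ft x} ⊆ A ∪ {x | ηstar x ≠ ft x} := by
    intro x hx
    by_cases h : η x = ηstar x
    · right; simp only [Set.mem_setOf_eq] at *; rw [← h]; exact hx
    · left; exact h
  have ht : (μt {x | η x ≠ ft x}).toReal
      ≤ (μt A).toReal + (μt {x | ηstar x ≠ ft x}).toReal := by
    rw [← ENNReal.toReal_add (measure_ne_top _ _) (measure_ne_top _ _)]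
    exact ENNReal.toReal_mono
      (ENNReal.add_ne_top.2 ⟨measure_ne_top _ _, measure_ne_top _ _⟩)
      ((measure_mono hsub_t).trans (measure_union_le _ _))
  -- triangle inequality on source
  have hsub_s : A ⊆ {x | η x ≠ fs x} ∪ {x | ηstar x ≠ fs x} := by
    intro x hx
    by_cases h : η x = fs x
    · right; simp only [Set.mem_setOf_eq] at *; rw [← h]; exact fun he => hx he.symm
    · left; exact h
  have hs : (μs A).toReal
      ≤ (μs {x | η x ≠ fs x}).toReal + (μs {x | ηstar x ≠ fs x}).toReal := by
    rw [← ENNReal.toReal_add (measure_ne_top _ _) (measure_ne_top _ _)]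
    exact ENNReal.toReal_mono
      (ENNReal.add_ne_top.2 ⟨measure_ne_top _ _, measure_ne_top _ _⟩)
      ((measure_mono hsub_s).trans (measure_union_le _ _))
  rw [hεt, hεs, hεs, hεt]
  linarith
end

section
/- Let E = EuclideanSpace ℝ (Fin p), let K be a positive natural number, c : Fin K → E class centers, and k : Fin K. Define B : E → ℝ by B(x) = Σ_l ‖(Function.update c k x) l − (1/K) Σ_i (Function.update c k x) i‖², i.e., the full between-class trace tr(S_b) = Σ_l ‖c_l − c̄‖² viewed as a function of the k-th class center, where the global center c̄ depends on all centers. Then B is differentiable at c k and its gradient at c k equals 2 • (c k − (1/K) Σ_l c l); in particular, the contributions of the cross terms through the global center cancel because Σ_l (c l − c̄) = 0. -/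
open scoped BigOperators RealInnerProductSpace

/-- The gradient of the full between-class trace `tr(S_b) = Σ_l ‖c_l − c̄‖²`,
viewed as a function of the `k`-th class center (through which the global
center `c̄` also varies), is `2 (c_k − (1/K) Σ_l c_l)`: the cross-term
contributions through the global center cancel since `Σ_l (c_l − c̄) = 0`. -/
theorem gradient_between_class_trace_wrt_center
    {p K : ℕ} (hK : 0 < K)
    (c : Fin K → EuclideanSpace ℝ (Fin p))
    (k : Fin K) :
    HasGradientAt
      (fun x : EuclideanSpace ℝ (Fin p) =>
        ∑ l : Fin K, ‖(Function.update c k x) l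
          - (K : ℝ)⁻¹ • ∑ i : Fin K, (Function.update c k x) i‖ ^ 2)
      ((2 : ℝ) • (c k - (K : ℝ)⁻¹ • ∑ l : Fin K, c l))
      (c k) := by
  have hKne : (K : ℝ) ≠ 0 := Nat.cast_ne_zero.mpr hK.ne'
  set s : EuclideanSpace ℝ (Fin p) := (∑ i : Fin K, c i) - c k with hs
  have hsum : ∀ x : EuclideanSpace ℝ (Fin p),
      ∑ i : Fin K, Function.update c k x i = x + s := by
    intro x
    simpa using Finset.sum_update_of_mem (Finset.mem_univ k) c x
  set a : Fin K → ℝ := fun l => (if l = k then (1:ℝ) else 0) - (K : ℝ)⁻¹ with ha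
  set φ : Fin K → EuclideanSpace ℝ (Fin p) → EuclideanSpace ℝ (Fin p) := fun l x =>
    Function.update c k x l - (K : ℝ)⁻¹ • ∑ i : Fin K, Function.update c k x i with hφ
  have h2 : HasFDerivAt (fun x : EuclideanSpace ℝ (Fin p) =>
        (K : ℝ)⁻¹ • ∑ i : Fin K, Function.update c k x i)
      ((K : ℝ)⁻¹ • ContinuousLinearMap.id ℝ (EuclideanSpace ℝ (Fin p))) (c k) := by
    have h : HasFDerivAt (fun x : EuclideanSpace ℝ (Fin p) => (K : ℝ)⁻¹ • (x + s))
        ((K : ℝ)⁻¹ • ContinuousLinearMap.id ℝ (EuclideanSpace ℝ (Fin p))) (c k) :=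
      ((hasFDerivAt_id (c k)).add_const s).const_smul ((K : ℝ)⁻¹)
    refine h.congr_of_eventuallyEq ?_
    filter_upwards with x using by rw [hsum]
  have hder : ∀ l : Fin K, HasFDerivAt (φ l)
      (a l • ContinuousLinearMap.id ℝ (EuclideanSpace ℝ (Fin p))) (c k) := by
    intro l
    by_cases hl : l = k
    · subst hl
      have h1 : HasFDerivAt (fun x : EuclideanSpace ℝ (Fin p) => Function.update c l x l)
          (ContinuousLinearMap.id ℝ (EuclideanSpace ℝ (Fin p))) (c l) := by
        refine (hasFDerivAt_id (c l)).congr_of_eventuallyEq ?_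
        filter_upwards with x using by simp
      have h3 := h1.sub h2
      have he : a l • ContinuousLinearMap.id ℝ (EuclideanSpace ℝ (Fin p))
          = ContinuousLinearMap.id ℝ (EuclideanSpace ℝ (Fin p))
            - (K : ℝ)⁻¹ • ContinuousLinearMap.id ℝ (EuclideanSpace ℝ (Fin p)) := by
        ext v i
        simp [ha]
        ring
      rw [hφ, he]
      exact h3
    · have h1 : HasFDerivAt (fun x : EuclideanSpace ℝ (Fin p) => Function.update c k x l)
          (0 : EuclideanSpace ℝ (Fin p) →L[ℝ] EuclideanSpace ℝ (Fin p)) (c k) := by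
        refine (hasFDerivAt_const (c l) (c k)).congr_of_eventuallyEq ?_
        filter_upwards with x using by simp [Function.update_of_ne hl]
      have h3 := h1.sub h2
      have he : a l • ContinuousLinearMap.id ℝ (EuclideanSpace ℝ (Fin p))
          = (0 : EuclideanSpace ℝ (Fin p) →L[ℝ] EuclideanSpace ℝ (Fin p))
            - (K : ℝ)⁻¹ • ContinuousLinearMap.id ℝ (EuclideanSpace ℝ (Fin p)) := by
        ext v i
        simp [ha, hl]
      rw [hφ, he]
      exact h3
  have hφck : ∀ l, φ l (c k) = c l - (K : ℝ)⁻¹ • ∑ i : Fin K, c i := by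
    intro l; simp [hφ, Function.update_eq_self]
  rw [hasGradientAt_iff_hasFDerivAt]
  have key : ∀ l : Fin K, HasFDerivAt (fun x : EuclideanSpace ℝ (Fin p) => ‖φ l x‖ ^ 2)
      ((fderivInnerCLM ℝ (φ l (c k), φ l (c k))).comp
        ((a l • ContinuousLinearMap.id ℝ (EuclideanSpace ℝ (Fin p))).prod
          (a l • ContinuousLinearMap.id ℝ (EuclideanSpace ℝ (Fin p))))) (c k) := by
    intro l
    have h := (hder l).inner ℝ (hder l)
    refine h.congr_of_eventuallyEq ?_
    filter_upwards with x using by rw [real_inner_self_eq_norm_sq]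
  have hsum' := HasFDerivAt.fun_sum (fun l (_ : l ∈ Finset.univ) => key l)
  refine hsum'.congr_fderiv (Eq.symm ?_)
  ext t
  simp only [ContinuousLinearMap.coe_sum', Finset.sum_apply, ContinuousLinearMap.coe_comp',
    Function.comp_apply, ContinuousLinearMap.prod_apply, ContinuousLinearMap.coe_smul',
    Pi.smul_apply, ContinuousLinearMap.coe_id', id_eq, fderivInnerCLM_apply,
    InnerProductSpace.toDual_apply_apply]
  simp only [hφck, ha, real_inner_smul_left, real_inner_smul_right, inner_sub_left,
    inner_sub_right, inner_smul_left, inner_smul_right, sum_inner, inner_sum,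
    RCLike.inner_apply, conj_trivial]
  simp only [show ∀ y : EuclideanSpace ℝ (Fin p), (inner ℝ t y : ℝ) = inner ℝ y t from
    fun y => real_inner_comm y t]
  set I : Fin K → ℝ := fun i => inner ℝ (c i) t with hI
  set S : ℝ := ∑ i : Fin K, I i with hSdef
  have hstep : ∀ x : Fin K,
      ((if x = k then (1:ℝ) else 0) - (K : ℝ)⁻¹) * (I x - (K : ℝ)⁻¹ * S) +
        (((if x = k then (1:ℝ) else 0) - (K : ℝ)⁻¹) * I x -
          (K : ℝ)⁻¹ * ∑ y : Fin K, ((if x = k then (1:ℝ) else 0) - (K : ℝ)⁻¹) * I y)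
      = (if x = k then (1:ℝ) else 0) * (2 * (I x - (K : ℝ)⁻¹ * S))
          - (K : ℝ)⁻¹ * (2 * (I x - (K : ℝ)⁻¹ * S)) := by
    intro x
    rw [← Finset.mul_sum, ← hSdef]
    split_ifs <;> ring
  rw [Finset.sum_congr rfl (fun x _ => hstep x), Finset.sum_sub_distrib]
  simp only [ite_mul, one_mul, zero_mul]
  rw [Finset.sum_ite_eq' Finset.univ k (fun x => 2 * (I x - (K : ℝ)⁻¹ * S)),
    if_pos (Finset.mem_univ k), ← Finset.mul_sum]
  have hsumS : ∑ x : Fin K, 2 * (I x - (K : ℝ)⁻¹ * S) = 0 := by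
    simp only [mul_sub, Finset.sum_sub_distrib, ← Finset.mul_sum, ← hSdef,
      Finset.sum_const, Finset.card_univ, Fintype.card_fin, nsmul_eq_mul]
    field_simp
    ring
  rw [hsumS]
  simp only [hI]
  ring
end

section
/- Let E = EuclideanSpace ℝ (Fin p), let h : Fin m → E be feature vectors, y : Fin m → Fin K class labels (K a positive natural number), c : Fin K → E class centers, and k : Fin K. Define W : E → ℝ by W(x) = Σ_j ‖h j − (Function.update c k x) (y j)‖² and B : E → ℝ by B(x) = Σ_l ‖(Function.update c k x) l − (1/K) Σ_i (Function.update c k x) i‖², and assume B(c k) ≠ 0. Then the trace-ratio Fisher loss F(x) = W(x)/B(x), viewed as a function of the k-th class center, is differentiable at c k with gradient equal to (1 / B(c k)) • (Σ_j (if y j = k then (2 : ℝ) else 0) • (c k − h j)) − (2 · W(c k) / (B(c k))²) • (c k − (1/K) Σ_l c l). -/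
open scoped BigOperators
open InnerProductSpace

section Helpers

variable {p : ℕ}

/-- Gradient of `‖φ ·‖²` when `φ` has derivative `t • id`. -/
lemma grad_norm_sq_comp (φ : EuclideanSpace ℝ (Fin p) → EuclideanSpace ℝ (Fin p)) (t : ℝ)
    (x : EuclideanSpace ℝ (Fin p))
    (hφ : HasFDerivAt φ (t • ContinuousLinearMap.id ℝ (EuclideanSpace ℝ (Fin p))) x) :
    HasFDerivAt (fun y => ‖φ y‖ ^ 2)
      (InnerProductSpace.toDual ℝ (EuclideanSpace ℝ (Fin p)) ((2 * t) • φ x)) x := by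
  have h1 := hφ.inner ℝ hφ
  have h2 : (fun y => ‖φ y‖ ^ 2) = fun y => (inner ℝ (φ y) (φ y) : ℝ) := by
    funext y; rw [real_inner_self_eq_norm_sq]
  rw [h2]
  refine h1.congr_fderiv ?_
  ext v
  simp only [InnerProductSpace.toDual_apply_apply, ContinuousLinearMap.coe_comp', Function.comp_apply,
    ContinuousLinearMap.prod_apply, ContinuousLinearMap.coe_smul', Pi.smul_apply,
    ContinuousLinearMap.coe_id', id_eq, fderivInnerCLM_apply, real_inner_smul_left,
    real_inner_smul_right, real_inner_comm]
  ring

lemma hasGradSum {ι : Type*} (s : Finset ι) (f : ι → EuclideanSpace ℝ (Fin p) → ℝ)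
    (g : ι → EuclideanSpace ℝ (Fin p)) (x : EuclideanSpace ℝ (Fin p))
    (hf : ∀ i ∈ s, HasFDerivAt (f i) (InnerProductSpace.toDual ℝ _ (g i)) x) :
    HasFDerivAt (fun y => ∑ i ∈ s, f i y)
      (InnerProductSpace.toDual ℝ (EuclideanSpace ℝ (Fin p)) (∑ i ∈ s, g i)) x := by
  rw [map_sum]
  exact HasFDerivAt.fun_sum hf

end Helpers

/-- The gradient of the trace-ratio Fisher loss `tr(S_w)/tr(S_b)`, viewed as a
function of the `k`-th class center, obtained by the quotient rule. -/
theorem gradient_fisher_TR_wrt_center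
    {p m K : ℕ} (hK : 0 < K)
    (h : Fin m → EuclideanSpace ℝ (Fin p))
    (y : Fin m → Fin K)
    (c : Fin K → EuclideanSpace ℝ (Fin p))
    (k : Fin K)
    (W B : EuclideanSpace ℝ (Fin p) → ℝ)
    (hW : ∀ x, W x = ∑ j : Fin m, ‖h j - (Function.update c k x) (y j)‖ ^ 2)
    (hB : ∀ x, B x = ∑ l : Fin K, ‖(Function.update c k x) l
      - (K : ℝ)⁻¹ • ∑ i : Fin K, (Function.update c k x) i‖ ^ 2)
    (hB0 : B (c k) ≠ 0) :
    HasGradientAt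
      (fun x : EuclideanSpace ℝ (Fin p) => W x / B x)
      ((1 / B (c k)) • (∑ j : Fin m, (if y j = k then (2 : ℝ) else 0) • (c k - h j))
        - (2 * W (c k) / (B (c k)) ^ 2) • (c k - (K : ℝ)⁻¹ • ∑ l : Fin K, c l))
      (c k) := by
  classical
  rw [hasGradientAt_iff_hasFDerivAt]
  set D := InnerProductSpace.toDual ℝ (EuclideanSpace ℝ (Fin p)) with hD
  set cbar : EuclideanSpace ℝ (Fin p) := (K : ℝ)⁻¹ • ∑ l : Fin K, c l with hcbar
  set gW : EuclideanSpace ℝ (Fin p) :=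
    ∑ j : Fin m, (if y j = k then (2 : ℝ) else 0) • (c k - h j) with hgW
  set gB : EuclideanSpace ℝ (Fin p) := (2 : ℝ) • (c k - cbar) with hgB
  have hKne : (K : ℝ) ≠ 0 := Nat.cast_ne_zero.mpr hK.ne'
  -- gradient of W
  have hW' : HasFDerivAt W (D gW) (c k) := by
    have hWfun : W = fun x => ∑ j : Fin m, ‖h j - (Function.update c k x) (y j)‖ ^ 2 :=
      funext hW
    rw [hWfun, hgW]
    apply hasGradSum
    intro j _
    by_cases hj : y j = k
    · have e1 : ∀ x : EuclideanSpace ℝ (Fin p), Function.update c k x (y j) = x := by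
        intro x; rw [hj, Function.update_self]
      simp only [e1, if_pos hj]
      have hd : HasFDerivAt (fun x : EuclideanSpace ℝ (Fin p) => h j - x)
          ((-1 : ℝ) • ContinuousLinearMap.id ℝ (EuclideanSpace ℝ (Fin p))) (c k) := by
        have h0 : HasFDerivAt (fun x : EuclideanSpace ℝ (Fin p) => h j - x)
            (-ContinuousLinearMap.id ℝ (EuclideanSpace ℝ (Fin p))) (c k) :=
          (hasFDerivAt_id (c k)).const_sub (h j)
        exact h0.congr_fderiv (neg_one_smul ℝ _).symm
      have := grad_norm_sq_comp (fun x : EuclideanSpace ℝ (Fin p) => h j - x) (-1) (c k) hd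
      convert this using 2
      module
    · have e1 : ∀ x : EuclideanSpace ℝ (Fin p), Function.update c k x (y j) = c (y j) := by
        intro x; rw [Function.update_of_ne hj]
      simp only [e1, if_neg hj, zero_smul, map_zero]
      exact hasFDerivAt_const _ _
  -- gradient of B
  set s : EuclideanSpace ℝ (Fin p) := ∑ i ∈ Finset.univ.erase k, c i with hs
  have hcks : c k + s = ∑ l : Fin K, c l := by
    rw [hs, Finset.add_sum_erase _ c (Finset.mem_univ k)]
  have hsum : ∀ x : EuclideanSpace ℝ (Fin p),
      ∑ i : Fin K, Function.update c k x i = x + s := by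
    intro x
    rw [Finset.sum_update_of_mem (Finset.mem_univ k)]
    congr 1
    rw [hs]
    congr 1
    ext i
    simp [Finset.mem_erase, Finset.mem_sdiff, and_comm]
  set t : Fin K → ℝ := fun l => if l = k then 1 - (K : ℝ)⁻¹ else -(K : ℝ)⁻¹ with ht
  have hB' : HasFDerivAt B (D gB) (c k) := by
    have hBfun : B = fun x => ∑ l : Fin K,
        ‖Function.update c k x l - (K : ℝ)⁻¹ • (x + s)‖ ^ 2 := by
      funext x; rw [hB x]
      refine Finset.sum_congr rfl fun l _ => ?_
      rw [hsum x]
    rw [hBfun]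
    have hgl : ∀ l : Fin K, HasFDerivAt
        (fun x : EuclideanSpace ℝ (Fin p) => ‖Function.update c k x l - (K : ℝ)⁻¹ • (x + s)‖ ^ 2)
        (D ((2 * t l) • (c l - cbar))) (c k) := by
      intro l
      have hval : Function.update c k (c k) l - (K : ℝ)⁻¹ • (c k + s) = c l - cbar := by
        rw [Function.update_eq_self, hcks, hcbar]
      by_cases hl : l = k
      · have e1 : ∀ x : EuclideanSpace ℝ (Fin p), Function.update c k x l = x := by
          intro x; rw [hl, Function.update_self]
        have hd : HasFDerivAt
            (fun x : EuclideanSpace ℝ (Fin p) => Function.update c k x l - (K : ℝ)⁻¹ • (x + s))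
            ((1 - (K : ℝ)⁻¹) • ContinuousLinearMap.id ℝ (EuclideanSpace ℝ (Fin p))) (c k) := by
          simp only [e1]
          have h0 : HasFDerivAt (fun x : EuclideanSpace ℝ (Fin p) => x - (K : ℝ)⁻¹ • (x + s))
              (ContinuousLinearMap.id ℝ (EuclideanSpace ℝ (Fin p))
                - (K : ℝ)⁻¹ • ContinuousLinearMap.id ℝ (EuclideanSpace ℝ (Fin p))) (c k) :=
            (hasFDerivAt_id (c k)).sub
              (((hasFDerivAt_id (c k)).add_const s).const_smul (K : ℝ)⁻¹)
          convert h0 using 1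
          module
        have h2 := grad_norm_sq_comp _ _ _ hd
        convert h2 using 2
        rw [hval, ht]; simp only [if_pos hl]
      · have e1 : ∀ x : EuclideanSpace ℝ (Fin p), Function.update c k x l = c l := by
          intro x; rw [Function.update_of_ne hl]
        have hd : HasFDerivAt
            (fun x : EuclideanSpace ℝ (Fin p) => Function.update c k x l - (K : ℝ)⁻¹ • (x + s))
            ((-(K : ℝ)⁻¹) • ContinuousLinearMap.id ℝ (EuclideanSpace ℝ (Fin p))) (c k) := by
          simp only [e1]
          have h0 : HasFDerivAt (fun x : EuclideanSpace ℝ (Fin p) => c l - (K : ℝ)⁻¹ • (x + s))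
              ((0 : EuclideanSpace ℝ (Fin p) →L[ℝ] EuclideanSpace ℝ (Fin p))
                - (K : ℝ)⁻¹ • ContinuousLinearMap.id ℝ (EuclideanSpace ℝ (Fin p))) (c k) :=
            (hasFDerivAt_const (c l) (c k)).sub
              (((hasFDerivAt_id (c k)).add_const s).const_smul (K : ℝ)⁻¹)
          convert h0 using 1
          module
        have h2 := grad_norm_sq_comp _ _ _ hd
        convert h2 using 2
        rw [hval, ht]; simp only [if_neg hl]
    have hsg := hasGradSum Finset.univ _ (fun l => (2 * t l) • (c l - cbar)) (c k)
      (fun l _ => hgl l)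
    have hzero : ∑ l : Fin K, (c l - cbar) = 0 := by
      rw [Finset.sum_sub_distrib, Finset.sum_const, Finset.card_univ, Fintype.card_fin,
        hcbar, ← Nat.cast_smul_eq_nsmul ℝ, smul_smul, mul_inv_cancel₀ hKne, one_smul, sub_self]
    have hgsum : ∑ l : Fin K, (2 * t l) • (c l - cbar) = gB := by
      have step : ∀ l : Fin K, (2 * t l) • (c l - cbar)
          = (if l = k then (2 : ℝ) • (c l - cbar) else 0)
            + (-(2 * (K : ℝ)⁻¹)) • (c l - cbar) := by
        intro l
        by_cases hl : l = k
        · simp only [ht, if_pos hl]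
          rw [← add_smul]; congr 1; ring
        · simp only [ht, if_neg hl]
          rw [zero_add]; congr 1; ring
      rw [Finset.sum_congr rfl fun l _ => step l, Finset.sum_add_distrib,
        Finset.sum_ite_eq' Finset.univ k fun l => (2 : ℝ) • (c l - cbar)]
      simp only [Finset.mem_univ, if_true, ← Finset.smul_sum, hzero, smul_zero, add_zero, hgB]
    rwa [hgsum] at hsg
  -- quotient rule via mul and inv
  have hinv : HasFDerivAt (fun x : EuclideanSpace ℝ (Fin p) => (B x)⁻¹)
      ((-(ContinuousLinearMap.mulLeftRight ℝ ℝ (B (c k))⁻¹ (B (c k))⁻¹)).comp (D gB)) (c k) :=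
    (hasFDerivAt_inv' hB0).comp (c k) hB'
  have hmul := hW'.fun_mul hinv
  have hfun : (fun x : EuclideanSpace ℝ (Fin p) => W x / B x) = fun x => W x * (B x)⁻¹ := by
    funext x; rw [div_eq_mul_inv]
  rw [hfun]
  refine hmul.congr_fderiv ?_
  ext v
  simp only [hD, InnerProductSpace.toDual_apply_apply, ContinuousLinearMap.add_apply,
    ContinuousLinearMap.smul_apply, ContinuousLinearMap.coe_comp', Function.comp_apply,
    ContinuousLinearMap.neg_apply, ContinuousLinearMap.mulLeftRight_apply,
    inner_sub_left, real_inner_smul_left, hgB, smul_eq_mul]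
  field_simp
  ring
end
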